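/- Let n ≥ 3, k,l ≥ 0, p,q ≥ 1, pq > 1, α = (k+2+(l+2)p)/(pq-1), β = (l+2+(k+2)q)/(pq-1), α+β ≤ n-2, and suppose -γ is a root of F(λ) = Q(α-λ)Q(β-λ) - pq·Q(α)Q(β) with 0 < γ and 0 < α+γ < n-2, 0 < β+γ < n-2. Let C_β = (Q(β)Q(α)^q)^{1/(pq-1)} and v*(x) = C_β|x|^{-β}, u*(x) = C_α|x|^{-α} with C_α = (Q(α)Q(β)^p)^{1/(pq-1)}. Then φ(x) = (pC_β^{p-1}/Q(α+γ))|x|^{-α-γ} and ψ(x) = |x|^{-β-γ} satisfy -Δφ = p|x|^k v*^{p-1} ψ and -Δψ = q|x|^l u*^{q-1} φ on ℝ^n \ {0}. -/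

import Mathlib

open Filter Topology

section Aux

lemma gderiv_aux (r a t : ℝ) : HasDerivAt (fun t : ℝ => r^2 + 2*a*t + t^2) (2*a + 2*t) t := by
  have h1 : HasDerivAt (fun t : ℝ => r^2 + 2*a*t) (0 + 2*a*1) t :=
    (hasDerivAt_const t (r^2)).add ((hasDerivAt_id t).const_mul (2*a))
  have h2 : HasDerivAt (fun t : ℝ => t^2) (2*t) t := by
    simpa using hasDerivAt_pow 2 t
  exact (h1.add h2).congr_deriv (by ring)

lemma second_deriv_aux (c s r a : ℝ) (hr : 0 < r) :
    iteratedDeriv 2 (fun t : ℝ => c * (r^2 + 2*a*t + t^2) ^ (s/2)) 0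
      = c * (s*(s-2)*a^2 * r^(s-4) + s * r^(s-2)) := by
  set g : ℝ → ℝ := fun t => r^2 + 2*a*t + t^2 with hg
  have hgpos : ∀ᶠ t in 𝓝 (0:ℝ), 0 < g t := by
    have hc : Continuous g := by fun_prop
    have hg00 : g 0 = r^2 := by simp [hg]
    have h0 : 0 < g 0 := by rw [hg00]; positivity
    have := hc.continuousAt (x := (0:ℝ)).eventually (p := fun y => 0 < y)
      (isOpen_Ioi.mem_nhds (by rw [hg00] at h0 ⊢; exact h0))
    exact this
  have hderiv : ∀ t, 0 < g t → HasDerivAt (fun t => c * g t ^ (s/2))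
      (c * ((2*a + 2*t) * (s/2) * g t ^ (s/2 - 1))) t := by
    intro t ht
    exact ((gderiv_aux r a t).rpow_const (Or.inl (ne_of_gt ht))).const_mul c
  have hEq : deriv (fun t => c * g t ^ (s/2))
      =ᶠ[𝓝 (0:ℝ)] fun t => c * ((2*a + 2*t) * (s/2) * g t ^ (s/2 - 1)) := by
    filter_upwards [hgpos] with t ht
    exact (hderiv t ht).deriv
  have h2 : iteratedDeriv 2 (fun t => c * g t ^ (s/2)) 0
      = deriv (deriv (fun t => c * g t ^ (s/2))) 0 := by
    rw [iteratedDeriv_succ, iteratedDeriv_one]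
  rw [h2, hEq.deriv_eq]
  have hg0 : g 0 = r^2 := by simp [hg]
  have hu : HasDerivAt (fun t : ℝ => (2*a + 2*t) * (s/2)) (2 * (s/2)) 0 := by
    have : HasDerivAt (fun t : ℝ => 2*a + 2*t) (0 + 2*1) 0 :=
      (hasDerivAt_const 0 (2*a)).add ((hasDerivAt_id 0).const_mul 2)
    simpa using this.mul_const (s/2)
  have hv : HasDerivAt (fun t : ℝ => g t ^ (s/2 - 1))
      ((2*a + 2*0) * (s/2 - 1) * g 0 ^ (s/2 - 1 - 1)) 0 := by
    have hne : g 0 ≠ 0 := by rw [hg0]; positivity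
    exact (gderiv_aux r a 0).rpow_const (Or.inl hne)
  have hfin : HasDerivAt (fun t => c * ((2*a + 2*t) * (s/2) * g t ^ (s/2 - 1)))
      (c * ((2 * (s/2)) * g 0 ^ (s/2 - 1)
        + ((2*a + 2*0) * (s/2)) * ((2*a + 2*0) * (s/2 - 1) * g 0 ^ (s/2 - 1 - 1)))) 0 :=
    (hu.mul hv).const_mul c
  rw [hfin.deriv]
  have e1 : g 0 ^ (s/2 - 1) = r ^ (s - 2) := by
    rw [hg0, ← Real.rpow_natCast r 2, ← Real.rpow_mul hr.le]
    congr 1; ring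
  have e2 : g 0 ^ (s/2 - 1 - 1) = r ^ (s - 4) := by
    rw [hg0, ← Real.rpow_natCast r 2, ← Real.rpow_mul hr.le]
    congr 1; ring
  rw [e1, e2]
  ring

end Aux

noncomputable def laplacian {n : ℕ} (f : EuclideanSpace ℝ (Fin n) → ℝ)
    (x : EuclideanSpace ℝ (Fin n)) : ℝ :=
  ∑ i : Fin n, iteratedDeriv 2 (fun t : ℝ => f (x + t • EuclideanSpace.single i (1 : ℝ))) 0

lemma lap_rpow {n : ℕ} (c s : ℝ) (x : EuclideanSpace ℝ (Fin n)) (hx : x ≠ 0) :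
    laplacian (fun y => c * ‖y‖ ^ s) x = c * (s * (s + n - 2)) * ‖x‖ ^ (s-2) := by
  have hr : 0 < ‖x‖ := norm_pos_iff.mpr hx
  have key : ∀ i : Fin n,
      (fun t : ℝ => c * ‖x + t • EuclideanSpace.single i (1:ℝ)‖ ^ s)
        = fun t : ℝ => c * (‖x‖^2 + 2*(x i)*t + t^2) ^ (s/2) := by
    intro i
    funext t
    have hnorm : ‖x + t • EuclideanSpace.single i (1:ℝ)‖^2 = ‖x‖^2 + 2*(x i)*t + t^2 := by
      rw [@norm_add_sq_real]
      have h1 : (inner ℝ x (t • EuclideanSpace.single i (1:ℝ)) : ℝ) = t * x i := by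
        rw [real_inner_smul_right, EuclideanSpace.inner_single_right]
        simp [mul_comm]
      have h2 : ‖t • EuclideanSpace.single i (1:ℝ)‖ = |t| := by
        rw [norm_smul, EuclideanSpace.norm_single]
        simp
      rw [h1, h2, sq_abs]
      ring
    rw [← hnorm]
    congr 1
    rw [← Real.rpow_natCast (‖x + t • EuclideanSpace.single i (1:ℝ)‖) 2,
      ← Real.rpow_mul (norm_nonneg _)]
    congr 1
    push_cast; ring
  unfold laplacian
  have key2 : ∀ i : Fin n,
      iteratedDeriv 2 (fun t : ℝ => c * ‖x + t • EuclideanSpace.single i (1:ℝ)‖ ^ s) 0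
        = c * (s*(s-2)*(x i)^2 * ‖x‖^(s-4) + s * ‖x‖^(s-2)) := by
    intro i
    rw [key i]
    exact second_deriv_aux c s ‖x‖ (x i) hr
  calc ∑ i : Fin n, iteratedDeriv 2
        (fun t : ℝ => c * ‖x + t • EuclideanSpace.single i (1:ℝ)‖ ^ s) 0
      = ∑ i : Fin n, c * (s*(s-2)*(x i)^2 * ‖x‖^(s-4) + s * ‖x‖^(s-2)) := by
        exact Finset.sum_congr rfl (fun i _ => key2 i)
    _ = c * (s*(s-2)* ‖x‖^(s-4) * (∑ i : Fin n, (x i)^2) + n * (s * ‖x‖^(s-2))) := by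
        simp only [mul_add, Finset.sum_add_distrib, Finset.sum_const,
          Finset.card_univ, Fintype.card_fin, nsmul_eq_mul]
        rw [show (∑ i : Fin n, c * (s * (s - 2) * x i ^ 2 * ‖x‖ ^ (s - 4)))
          = c * (s * (s - 2) * ‖x‖ ^ (s - 4)) * ∑ i : Fin n, x i ^ 2 by
            rw [Finset.mul_sum]; exact Finset.sum_congr rfl fun i _ => by ring]
        ring
    _ = c * (s * (s + n - 2)) * ‖x‖ ^ (s-2) := by
        have hsum : (∑ i : Fin n, (x i)^2) = ‖x‖^2 := by
          rw [EuclideanSpace.norm_eq, Real.sq_sqrt]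
          · exact (Finset.sum_congr rfl (fun i _ => (sq_abs (x i)).symm)).symm ▸ rfl
          · positivity
        rw [hsum]
        have h4 : ‖x‖^(s-4) * ‖x‖^2 = ‖x‖^(s-2) := by
          rw [← Real.rpow_natCast ‖x‖ 2, ← Real.rpow_add hr]
          congr 1; push_cast; ring
        calc c * (s*(s-2)* ‖x‖^(s-4) * ‖x‖^2 + n * (s * ‖x‖^(s-2)))
            = c * (s*(s-2)* (‖x‖^(s-4) * ‖x‖^2) + n * (s * ‖x‖^(s-2))) := by ring
          _ = c * (s * (s + n - 2)) * ‖x‖ ^ (s-2) := by rw [h4]; ring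

lemma prod_rpow_aux (A B p q : ℝ) (hA : 0 < A) (hB : 0 < B) (hpq : 1 < p * q) :
    ((A * B ^ p) ^ (1/(p*q-1))) ^ (q-1) * ((B * A ^ q) ^ (1/(p*q-1))) ^ (p-1) = A * B := by
  have hne : p * q - 1 ≠ 0 := by intro h; nlinarith
  set e : ℝ := 1/(p*q-1) with he
  have h1 : ((A * B ^ p) ^ e) ^ (q-1) = A ^ (e*(q-1)) * B ^ (p*(e*(q-1))) := by
    rw [← Real.rpow_mul (by positivity), Real.mul_rpow hA.le (Real.rpow_nonneg hB.le p),
      ← Real.rpow_mul hB.le]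
  have h2 : ((B * A ^ q) ^ e) ^ (p-1) = B ^ (e*(p-1)) * A ^ (q*(e*(p-1))) := by
    rw [← Real.rpow_mul (by positivity), Real.mul_rpow hB.le (Real.rpow_nonneg hA.le q),
      ← Real.rpow_mul hA.le]
  rw [h1, h2]
  have hx : e*(q-1) + q*(e*(p-1)) = 1 := by rw [he]; field_simp; ring
  have hy : p*(e*(q-1)) + e*(p-1) = 1 := by rw [he]; field_simp; ring
  calc A ^ (e*(q-1)) * B ^ (p*(e*(q-1))) * (B ^ (e*(p-1)) * A ^ (q*(e*(p-1))))
      = (A ^ (e*(q-1)) * A ^ (q*(e*(p-1)))) * (B ^ (p*(e*(q-1))) * B ^ (e*(p-1))) := by ring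
    _ = A ^ (e*(q-1) + q*(e*(p-1))) * B ^ (p*(e*(q-1)) + e*(p-1)) := by
        rw [← Real.rpow_add hA, ← Real.rpow_add hB]
    _ = A * B := by rw [hx, hy, Real.rpow_one, Real.rpow_one]

theorem linearized_solution (n : ℕ) (hn : 3 ≤ n) (k l p q α β γ Cα Cβ : ℝ)
    (hk : 0 ≤ k) (hl : 0 ≤ l) (hp : 1 ≤ p) (hq : 1 ≤ q) (hpq : 1 < p * q)
    (hα : α = (k + 2 + (l + 2) * p) / (p * q - 1))
    (hβ : β = (l + 2 + (k + 2) * q) / (p * q - 1))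
    (hsob : α + β ≤ (n : ℝ) - 2)
    (Q : ℝ → ℝ) (hQ : ∀ lam, Q lam = lam * ((n : ℝ) - 2 - lam))
    (hγ : 0 < γ)
    (hroot : Q (α + γ) * Q (β + γ) - p * q * Q α * Q β = 0)
    (hag : 0 < α + γ) (hag' : α + γ < (n : ℝ) - 2)
    (hbg : 0 < β + γ) (hbg' : β + γ < (n : ℝ) - 2)
    (hCα : Cα = (Q α * Q β ^ p) ^ (1 / (p * q - 1)))
    (hCβ : Cβ = (Q β * Q α ^ q) ^ (1 / (p * q - 1))) :
    ∀ x : EuclideanSpace ℝ (Fin n), x ≠ 0 →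
      -laplacian
          (fun y : EuclideanSpace ℝ (Fin n) =>
            p * Cβ ^ (p - 1) / Q (α + γ) * ‖y‖ ^ (-α - γ)) x
        = p * ‖x‖ ^ k * (Cβ * ‖x‖ ^ (-β)) ^ (p - 1) * ‖x‖ ^ (-β - γ) ∧
      -laplacian (fun y : EuclideanSpace ℝ (Fin n) => ‖y‖ ^ (-β - γ)) x
        = q * ‖x‖ ^ l * (Cα * ‖x‖ ^ (-α)) ^ (q - 1) *
            (p * Cβ ^ (p - 1) / Q (α + γ) * ‖x‖ ^ (-α - γ)) := by
  have hD : (0:ℝ) < p * q - 1 := by linarith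
  have hDne : p * q - 1 ≠ 0 := ne_of_gt hD
  have hα0 : 0 < α := by
    rw [hα]; apply div_pos _ hD; nlinarith
  have hβ0 : 0 < β := by
    rw [hβ]; apply div_pos _ hD; nlinarith
  have hα2 : α < (n:ℝ) - 2 := by linarith
  have hβ2 : β < (n:ℝ) - 2 := by linarith
  have hQα : 0 < Q α := by rw [hQ]; exact mul_pos hα0 (by linarith)
  have hQβ : 0 < Q β := by rw [hQ]; exact mul_pos hβ0 (by linarith)
  have hQag : 0 < Q (α + γ) := by rw [hQ]; exact mul_pos hag (by linarith)
  have hQbg : 0 < Q (β + γ) := by rw [hQ]; exact mul_pos hbg (by linarith)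
  have hCβ0 : 0 < Cβ := by rw [hCβ]; positivity
  have hCα0 : 0 < Cα := by rw [hCα]; positivity
  have hbp : β * p = α + k + 2 := by
    rw [hα, hβ, div_mul_eq_mul_div, div_add' _ _ _ hDne, div_add' _ _ _ hDne, div_left_inj' hDne]; ring
  have haq : α * q = β + l + 2 := by rw [hα, hβ]; field_simp; ring
  have hprod : Cα ^ (q-1) * Cβ ^ (p-1) = Q α * Q β := by
    rw [hCα, hCβ]; exact prod_rpow_aux (Q α) (Q β) p q hQα hQβ hpq
  intro x hx
  have hr : 0 < ‖x‖ := norm_pos_iff.mpr hx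
  constructor
  · -- first equation
    rw [lap_rpow (p * Cβ ^ (p - 1) / Q (α + γ)) (-α - γ) x hx]
    have hQform : (-α - γ) * ((-α - γ) + n - 2) = -Q (α + γ) := by rw [hQ]; ring
    rw [hQform]
    have hlhs : -(p * Cβ ^ (p - 1) / Q (α + γ) * -Q (α + γ) * ‖x‖ ^ (-α - γ - 2))
        = p * Cβ ^ (p - 1) * ‖x‖ ^ (-α - γ - 2) := by
      field_simp
    rw [hlhs]
    rw [Real.mul_rpow hCβ0.le (Real.rpow_nonneg (norm_nonneg x) _), ← Real.rpow_mul hr.le]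
    rw [show p * ‖x‖^k * (Cβ^(p-1) * ‖x‖^(-β*(p-1))) * ‖x‖^(-β-γ)
        = p * Cβ^(p-1) * (‖x‖^k * ‖x‖^(-β*(p-1)) * ‖x‖^(-β-γ)) from by ring,
      ← Real.rpow_add hr, ← Real.rpow_add hr]
    rw [show k + -β * (p - 1) + (-β - γ) = -α - γ - 2 by linear_combination -hbp]
  · -- second equation
    have hL2 : laplacian (fun y : EuclideanSpace ℝ (Fin n) => ‖y‖ ^ (-β - γ)) x
        = ((-β - γ) * ((-β - γ) + n - 2)) * ‖x‖ ^ (-β - γ - 2) := by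
      have h := lap_rpow (n := n) 1 (-β - γ) x hx
      simpa using h
    rw [hL2]
    have hQform : (-β - γ) * ((-β - γ) + n - 2) = -Q (β + γ) := by rw [hQ]; ring
    rw [hQform]
    have hlhs : -(-Q (β + γ) * ‖x‖ ^ (-β - γ - 2)) = Q (β + γ) * ‖x‖ ^ (-β - γ - 2) := by ring
    rw [hlhs]
    rw [Real.mul_rpow hCα0.le (Real.rpow_nonneg (norm_nonneg x) _), ← Real.rpow_mul hr.le]
    rw [show q * ‖x‖^l * (Cα^(q-1) * ‖x‖^(-α*(q-1))) *
          (p * Cβ ^ (p - 1) / Q (α + γ) * ‖x‖ ^ (-α - γ))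
        = (p * q * (Cα^(q-1) * Cβ^(p-1)) / Q (α + γ)) *
          (‖x‖^l * ‖x‖^(-α*(q-1)) * ‖x‖^(-α-γ)) from by ring,
      ← Real.rpow_add hr, ← Real.rpow_add hr, hprod,
      show l + -α * (q - 1) + (-α - γ) = -β - γ - 2 by linear_combination -haq]
    have hcoef : p * q * (Q α * Q β) / Q (α + γ) = Q (β + γ) := by
      field_simp
      linarith [hroot]
    rw [hcoef]
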